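/- arXiv:cs/0006012 — 2 statements merged into one kernel-verified Lean document; each statement's English description precedes it below -/
import Mathlib

section
/- If each of k parsers outputs a set of constituents (intervals with labels) such that no two constituents within one parser's output cross (i.e., their spans are either nested or disjoint), then the set of constituents receiving strictly more than k/2 votes (i.e., appearing in strictly more than k/2 of the parsers' outputs) contains no two crossing constituents. -/
/-- Two spans cross: they overlap but neither is nested in the other. -/
def Crosses (c d : ℕ × ℕ) : Prop :=
  (c.1 < d.1 ∧ d.1 < c.2 ∧ c.2 < d.2) ∨ (d.1 < c.1 ∧ c.1 < d.2 ∧ d.2 < c.2)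

theorem majority_vote_crossing_free {L : Type} (k : ℕ)
    (S : Fin k → Set (ℕ × ℕ × L))
    (hfree : ∀ p, ∀ c ∈ S p, ∀ d ∈ S p, ¬ Crosses (c.1, c.2.1) (d.1, d.2.1))
    (c d : ℕ × ℕ × L)
    (hc : 2 * Nat.card {p : Fin k // c ∈ S p} > k)
    (hd : 2 * Nat.card {p : Fin k // d ∈ S p} > k) :
    ¬ Crosses (c.1, c.2.1) (d.1, d.2.1) := by
  obtain ⟨p, hpc, hpd⟩ : ∃ p, c ∈ S p ∧ d ∈ S p := by
    by_contra h
    push_neg at h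
    have hA : Nat.card {p : Fin k // c ∈ S p} = ({p : Fin k | c ∈ S p}).ncard := rfl
    have hB : Nat.card {p : Fin k // d ∈ S p} = ({p : Fin k | d ∈ S p}).ncard := rfl
    have hdisj : Disjoint {p : Fin k | c ∈ S p} {p : Fin k | d ∈ S p} := by
      rw [Set.disjoint_left]
      intro p hp hq
      exact h p hp hq
    have hfin1 : ({p : Fin k | c ∈ S p}).Finite := Set.toFinite _
    have hfin2 : ({p : Fin k | d ∈ S p}).Finite := Set.toFinite _
    have hunion := Set.ncard_union_eq hdisj hfin1 hfin2
    have hle : ({p : Fin k | c ∈ S p} ∪ {p : Fin k | d ∈ S p}).ncard ≤ k := by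
      have := Set.ncard_le_ncard (Set.subset_univ
        ({p : Fin k | c ∈ S p} ∪ {p : Fin k | d ∈ S p})) (Set.toFinite _)
      simpa [Set.ncard_univ] using this
    omega
  exact hfree p c hpc d hpd
end

section
/- Let d be a metric (symmetric, satisfying the triangle inequality, with d(x,x)=0) on a space of parses, and let π₁,…,πₙ (n ≥ 1) be observed parses. Let g be a minimizer over {π₁,…,πₙ} of the sum Σᵢ d(πᵢ, ·), and let c be any point in the whole space. Then Σᵢ d(πᵢ, g) ≤ (2(n−1)/n) · Σᵢ d(πᵢ, c). -/
theorem centroid_approximation_bound {X : Type} (d : X → X → ℝ)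
    (hsymm : ∀ x y, d x y = d y x)
    (htri : ∀ x y z, d x z ≤ d x y + d y z)
    (hrefl : ∀ x, d x x = 0)
    (n : ℕ) (hn : 1 ≤ n) (π : Fin n → X)
    (g : X) (i₀ : Fin n) (hg : g = π i₀)
    (hmin : ∀ j : Fin n, ∑ i, d (π i) g ≤ ∑ i, d (π i) (π j))
    (c : X) :
    ∑ i, d (π i) g ≤ (2 * ((n : ℝ) - 1) / n) * ∑ i, d (π i) c := by
  set S := ∑ i, d (π i) c with hS
  set T := ∑ i, d (π i) g with hT
  have hnpos : (0:ℝ) < n := by exact_mod_cast hn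
  have key : ∀ j : Fin n, ∑ i, d (π i) (π j) ≤ S + ((n:ℝ) - 2) * d (π j) c := by
    intro j
    have h1 : ∑ i ∈ Finset.univ.erase j, d (π i) (π j) + d (π j) (π j)
        = ∑ i, d (π i) (π j) := Finset.sum_erase_add _ _ (Finset.mem_univ j)
    have h2 : ∑ i ∈ Finset.univ.erase j, d (π i) c + d (π j) c = S :=
      Finset.sum_erase_add _ _ (Finset.mem_univ j)
    have hcard : ((Finset.univ.erase j).card : ℝ) = (n:ℝ) - 1 := by
      rw [Finset.card_erase_of_mem (Finset.mem_univ j)]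
      simp [Nat.cast_sub hn]
    have h3 : ∑ i ∈ Finset.univ.erase j, d (π i) (π j)
        ≤ ∑ i ∈ Finset.univ.erase j, (d (π i) c + d (π j) c) := by
      apply Finset.sum_le_sum
      intro i _
      calc d (π i) (π j) ≤ d (π i) c + d c (π j) := htri _ _ _
        _ = d (π i) c + d (π j) c := by rw [hsymm c]
    have h4 : ∑ i ∈ Finset.univ.erase j, (d (π i) c + d (π j) c)
        = (∑ i ∈ Finset.univ.erase j, d (π i) c) + ((n:ℝ) - 1) * d (π j) c := by
      rw [Finset.sum_add_distrib, Finset.sum_const, nsmul_eq_mul, hcard]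
    calc ∑ i, d (π i) (π j)
        = ∑ i ∈ Finset.univ.erase j, d (π i) (π j) + d (π j) (π j) := h1.symm
      _ = ∑ i ∈ Finset.univ.erase j, d (π i) (π j) := by rw [hrefl]; ring
      _ ≤ (∑ i ∈ Finset.univ.erase j, d (π i) c) + ((n:ℝ) - 1) * d (π j) c := by
          rw [← h4]; exact h3
      _ = (S - d (π j) c) + ((n:ℝ) - 1) * d (π j) c := by rw [← h2]; ring
      _ = S + ((n:ℝ) - 2) * d (π j) c := by ring
  have hsum : (n:ℝ) * T ≤ (2 * ((n:ℝ) - 1)) * S := by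
    have : ∑ _j : Fin n, T ≤ ∑ j : Fin n, (S + ((n:ℝ) - 2) * d (π j) c) :=
      Finset.sum_le_sum fun j _ => le_trans (hmin j) (key j)
    have hl : ∑ _j : Fin n, T = (n:ℝ) * T := by
      rw [Finset.sum_const, Finset.card_univ, Fintype.card_fin, nsmul_eq_mul]
    have hr : ∑ j : Fin n, (S + ((n:ℝ) - 2) * d (π j) c)
        = (n:ℝ) * S + ((n:ℝ) - 2) * S := by
      rw [Finset.sum_add_distrib, Finset.sum_const, Finset.card_univ,
        Fintype.card_fin, nsmul_eq_mul, ← Finset.mul_sum]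
    rw [hl, hr] at this
    linarith
  rw [div_mul_eq_mul_div, le_div_iff₀ hnpos]
  nlinarith [hsum]
end
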